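/- Let i ≥ 0 and let x ≥ 2^(i+1) be a natural number with x ≡ 2^i + t (mod 2^(i+1)) for some t with 0 ≤ t < 2^i. If j is a natural number with 0 ≤ 2j ≤ t and x − 2j contains 2^i − j to base 2, then j = 0. -/

import Mathlib

/-- If `x ≥ 2^(i+1)`, `x ≡ 2^i + t (mod 2^(i+1))` with `0 ≤ t < 2^i`,
`2j ≤ t` and `x - 2j` contains `2^i - j` to base 2, then `j = 0`. -/
theorem stmt4 (i x t j : ℕ) (ht : t < 2 ^ i) (hx : 2 ^ (i + 1) ≤ x)
    (hmod : x % 2 ^ (i + 1) = 2 ^ i + t)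
    (hj : 2 * j ≤ t) (hcont : (2 ^ i - j) &&& (x - 2 * j) = 2 ^ i - j) :
    j = 0 := by
  by_contra hj0
  have hj1 : 1 ≤ j := Nat.one_le_iff_ne_zero.mpr hj0
  set a := 2 ^ i - j with ha
  set b := x - 2 * j with hb
  -- compute b % 2^i = t - 2*j
  have hdm := Nat.div_add_mod x (2 ^ (i + 1))
  rw [hmod] at hdm
  have hpow : 2 ^ (i + 1) = 2 * 2 ^ i := by ring
  have hbform : b = (2 * (x / 2 ^ (i + 1)) + 1) * 2 ^ i + (t - 2 * j) := by
    have h2 : (2 * (x / 2 ^ (i + 1)) + 1) * 2 ^ i = 2 ^ (i + 1) * (x / 2 ^ (i + 1)) + 2 ^ i := by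
      rw [hpow]; ring
    omega
  have hbmod : b % 2 ^ i = t - 2 * j := by
    rw [hbform, Nat.mul_add_mod']
    exact Nat.mod_eq_of_lt (by omega)
  -- a < 2^i so a % 2^i = a
  have hamod : a % 2 ^ i = a := Nat.mod_eq_of_lt (by omega)
  -- a = a &&& (b % 2^i)
  have key : a &&& (b % 2 ^ i) = a := by
    rw [← Nat.and_two_pow_sub_one_eq_mod b i, ← Nat.and_assoc, hcont,
      Nat.and_two_pow_sub_one_eq_mod, hamod]
  have hle : a ≤ b % 2 ^ i := key ▸ Nat.and_le_right
  rw [hbmod] at hle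
  omega
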